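/- Let ω = e^{2πi/3} and z₁ = (0,1,-ω)/√2, z₂ = (0,1,-ω²)/√2. If z = (a, 1, c) with a ∈ ℂ, c ∈ ℝ, and |⟨z, zⱼ⟩|² = (1/4)·‖z‖² for j = 1, 2, then |a|⁴ + 1 + c⁴ = (1/2)·(|a|² + 1 + c²)²; i.e., the normalized point (|a|², 1, c²)/‖z‖² lies on the sphere x₁²+x₂²+x₃² = 1/2. -/

import Mathlib

theorem stmt_11 (ω : ℂ) (hω : ω = Complex.exp (2 * Real.pi * Complex.I / 3))
    (z₁ z₂ : Fin 3 → ℂ)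
    (hz₁ : z₁ = ![0, (1 / Real.sqrt 2 : ℂ), -ω / Real.sqrt 2])
    (hz₂ : z₂ = ![0, (1 / Real.sqrt 2 : ℂ), -ω ^ 2 / Real.sqrt 2])
    (a : ℂ) (c : ℝ) (z : Fin 3 → ℂ) (hz : z = ![a, 1, (c : ℂ)])
    (h1 : ‖∑ i : Fin 3, (starRingEnd ℂ) (z i) * z₁ i‖ ^ 2 =
        (1 / 4) * (‖a‖ ^ 2 + 1 + c ^ 2))
    (h2 : ‖∑ i : Fin 3, (starRingEnd ℂ) (z i) * z₂ i‖ ^ 2 =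
        (1 / 4) * (‖a‖ ^ 2 + 1 + c ^ 2)) :
    ‖a‖ ^ 4 + 1 + c ^ 4 = (1 / 2) * (‖a‖ ^ 2 + 1 + c ^ 2) ^ 2 := by
  have hθ : (2 * Real.pi * Complex.I / 3) = ((2*Real.pi/3 : ℝ) : ℂ) * Complex.I := by
    push_cast; ring
  rw [hθ, Complex.exp_mul_I] at hω
  have hc : Real.cos (2*Real.pi/3) = -(1/2) := by
    have : 2*Real.pi/3 = Real.pi - Real.pi/3 := by ring
    rw [this, Real.cos_pi_sub, Real.cos_pi_div_three]
  have hs : Real.sin (2*Real.pi/3) = Real.sqrt 3 / 2 := by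
    have : 2*Real.pi/3 = Real.pi - Real.pi/3 := by ring
    rw [this, Real.sin_pi_sub, Real.sin_pi_div_three]
  have hre : ω.re = -(1/2) := by
    rw [hω]
    simp only [Complex.add_re, Complex.mul_re, Complex.I_re, Complex.I_im,
      Complex.cos_ofReal_re, Complex.sin_ofReal_im, Complex.sin_ofReal_re,
      Complex.cos_ofReal_im]
    rw [hc]; ring
  have him : ω.im = Real.sqrt 3 / 2 := by
    rw [hω]
    simp only [Complex.add_im, Complex.mul_im, Complex.I_re, Complex.I_im,
      Complex.cos_ofReal_im, Complex.sin_ofReal_im, Complex.sin_ofReal_re,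
      Complex.cos_ofReal_re]
    rw [hs]; ring
  subst hz hz₁
  simp only [Fin.sum_univ_three, Matrix.cons_val_zero, Matrix.cons_val_one, Matrix.head_cons,
    Matrix.cons_val_two, Matrix.tail_cons, mul_zero, map_one, one_mul, zero_add] at h1
  have hsum : (1/(Real.sqrt 2:ℂ) + (starRingEnd ℂ) (c:ℂ) * (-ω/(Real.sqrt 2:ℂ)))
      = (1 - (c:ℂ)*ω)/((Real.sqrt 2:ℝ):ℂ) := by
    rw [Complex.conj_ofReal]; ring
  rw [hsum, norm_div, Complex.norm_real, Real.norm_eq_abs, abs_of_nonneg (Real.sqrt_nonneg 2), div_pow,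
    Real.sq_sqrt (by norm_num : (2:ℝ) ≥ 0), Complex.sq_norm, Complex.normSq_apply] at h1
  simp only [Complex.sub_re, Complex.sub_im, Complex.mul_re, Complex.mul_im,
    Complex.ofReal_re, Complex.ofReal_im, Complex.one_re, Complex.one_im, hre, him] at h1
  have s3 : Real.sqrt 3 ^ 2 = 3 := Real.sq_sqrt (by norm_num)
  have key : ‖a‖ ^ 2 = (1+c)^2 := by nlinarith [s3]
  nlinarith [key]
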